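/- Let J be an ideal of k[x₁,…,xₙ] containing f = g·x₁ + h with g, h ∈ k[x₂,…,xₙ] and g a nonzerodivisor modulo J, and let J₁ = J ∩ k[x₂,…,xₙ]. Then J equals the saturation (⟨J₁, g·x₁ + h⟩ : g^∞). -/
import Mathlib


/-- The saturation `(I : g^∞) = {a | ∃ m, g^m · a ∈ I}` of an ideal. -/
def Ideal.sat {R : Type*} [CommRing R] (I : Ideal R) (g : R) : Ideal R where
  carrier := {a | ∃ m : ℕ, g ^ m * a ∈ I}
  zero_mem' := ⟨0, by simp⟩
  add_mem' := by
    rintro a b ⟨m, hm⟩ ⟨l, hl⟩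
    refine ⟨m + l, ?_⟩
    rw [mul_add]
    exact I.add_mem
      (by rw [pow_add, mul_comm (g ^ m) (g ^ l), mul_assoc]; exact I.mul_mem_left _ hm)
      (by rw [pow_add, mul_assoc]; exact I.mul_mem_left _ hl)
  smul_mem' := by
    rintro c a ⟨m, hm⟩
    exact ⟨m, by rw [smul_eq_mul, mul_left_comm]; exact I.mul_mem_left _ hm⟩

/-- Birational projection, part (a): under the same hypotheses as the
primality transfer, `J = (⟨J₁, g·x₁ + h⟩ : g^∞)` where
`J₁ = J ∩ k[x₂,…,xₙ]` is the elimination ideal. -/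
theorem birational_projection_saturation {k : Type*} [Field k] (n : ℕ)
    (J : Ideal (Polynomial (MvPolynomial (Fin n) k)))
    (g h : MvPolynomial (Fin n) k)
    (hf : Polynomial.C g * Polynomial.X + Polynomial.C h ∈ J)
    (hnzd : ∀ p, Polynomial.C g * p ∈ J → p ∈ J) :
    J = (Ideal.span {Polynomial.C g * Polynomial.X + Polynomial.C h} ⊔
          Ideal.map (Polynomial.C :
            MvPolynomial (Fin n) k →+* Polynomial (MvPolynomial (Fin n) k))
            (J.comap (Polynomial.C :
              MvPolynomial (Fin n) k →+* Polynomial (MvPolynomial (Fin n) k)))).sat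
        (Polynomial.C g) := by
  set f : Polynomial (MvPolynomial (Fin n) k) :=
    Polynomial.C g * Polynomial.X + Polynomial.C h with hfdef
  set Cmap := (Polynomial.C : MvPolynomial (Fin n) k →+* Polynomial (MvPolynomial (Fin n) k))
    with hCdef
  set I : Ideal (Polynomial (MvPolynomial (Fin n) k)) :=
    Ideal.span {f} ⊔ Ideal.map Cmap (J.comap Cmap) with hI
  have key : ∀ p : Polynomial (MvPolynomial (Fin n) k), ∃ (m : ℕ) (q : MvPolynomial (Fin n) k),
      (Polynomial.C g) ^ m * p - Polynomial.C q ∈ Ideal.span {f} := by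
    intro p
    induction p using Polynomial.induction_on' with
    | add p r hp hr =>
      obtain ⟨m₁, q₁, h₁⟩ := hp
      obtain ⟨m₂, q₂, h₂⟩ := hr
      refine ⟨m₁ + m₂, g ^ m₂ * q₁ + g ^ m₁ * q₂, ?_⟩
      have : (Polynomial.C g) ^ (m₁ + m₂) * (p + r) -
          Polynomial.C (g ^ m₂ * q₁ + g ^ m₁ * q₂) =
          (Polynomial.C g) ^ m₂ * ((Polynomial.C g) ^ m₁ * p - Polynomial.C q₁) +
          (Polynomial.C g) ^ m₁ * ((Polynomial.C g) ^ m₂ * r - Polynomial.C q₂) := by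
        simp only [map_add, map_mul, map_pow]
        ring
      rw [this]
      exact Ideal.add_mem _ (Ideal.mul_mem_left _ _ h₁) (Ideal.mul_mem_left _ _ h₂)
    | monomial i a =>
      refine ⟨i, a * (-h) ^ i, ?_⟩
      have hdvd : f ∣ (Polynomial.C g) ^ i * (Polynomial.monomial i a) -
          Polynomial.C (a * (-h) ^ i) := by
        have h1 : (Polynomial.C g) ^ i * (Polynomial.monomial i a) -
            Polynomial.C (a * (-h) ^ i) =
            Polynomial.C a *
              ((Polynomial.C g * Polynomial.X) ^ i - (- Polynomial.C h) ^ i) := by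
          rw [← Polynomial.C_mul_X_pow_eq_monomial]
          simp only [map_mul, map_pow, map_neg]
          ring
        rw [h1]
        refine Dvd.dvd.mul_left ?_ _
        have := sub_dvd_pow_sub_pow (Polynomial.C g * Polynomial.X) (- Polynomial.C h) i
        simpa [hfdef, sub_neg_eq_add] using this
      exact Ideal.mem_span_singleton.mpr hdvd
  have hspanJ : Ideal.span {f} ≤ J := by
    rw [Ideal.span_le, Set.singleton_subset_iff]; exact hf
  have hIJ : I ≤ J := by
    rw [hI]
    exact sup_le hspanJ (Ideal.map_comap_le)
  apply le_antisymm
  · intro p hp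
    obtain ⟨m, q, hmq⟩ := key p
    have hCq : Polynomial.C q ∈ J := by
      have h2 : (Polynomial.C g) ^ m * p ∈ J := Ideal.mul_mem_left _ _ hp
      have := J.sub_mem h2 (hspanJ hmq)
      simpa using this
    refine ⟨m, ?_⟩
    have h3 : Polynomial.C q ∈ I :=
      Ideal.mem_sup_right (Ideal.mem_map_of_mem _ hCq)
    have h4 : (Polynomial.C g) ^ m * p - Polynomial.C q ∈ I := Ideal.mem_sup_left hmq
    have := I.add_mem h4 h3
    simpa using this
  · rintro p ⟨m, hm⟩
    have hmJ : (Polynomial.C g) ^ m * p ∈ J := hIJ hm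
    clear hm
    induction m with
    | zero => simpa using hmJ
    | succ m ih =>
      apply ih
      apply hnzd
      have : Polynomial.C g * ((Polynomial.C g) ^ m * p) =
          (Polynomial.C g) ^ (m + 1) * p := by ring
      rw [this]
      exact hmJ
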